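/- Let Γ_G, Γ_H ⊂ SL₂(ℤ) be congruence subgroups of level N (each containing Γ(N)), and let γ ∈ M₂(ℤ) with det(γ) = δ > 0. Suppose that for every s ∈ Γ_G there exists s′ ∈ Γ_H with s′·γ ≡ γ·s (mod N·δ). Then γ·Γ_G·γ⁻¹ ⊆ Γ_H. -/

import Mathlib

/-- Part of Proposition 7: let `Γ_G, Γ_H ⊆ SL₂(ℤ)` be congruence subgroups of level `N`
(both containing `Γ(N)`), and let `γ` be an integer matrix with `det(γ) = δ > 0`.
If for every `s ∈ Γ_G` there is `s′ ∈ Γ_H` with `s′·γ ≡ γ·s (mod Nδ)`, then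
`γ·Γ_G·γ⁻¹ ⊆ Γ_H` (conjugation computed in `GL₂(ℚ)`). -/
theorem conj_subgroup_le_of_congruence (N : ℕ) (hN : 0 < N)
    (ΓG ΓH : Subgroup (Matrix.SpecialLinearGroup (Fin 2) ℤ))
    (hG : CongruenceSubgroup.Gamma N ≤ ΓG) (hH : CongruenceSubgroup.Gamma N ≤ ΓH)
    (γ : Matrix (Fin 2) (Fin 2) ℤ) (δ : ℤ) (hδ : 0 < δ) (hγ : γ.det = δ)
    (hcong : ∀ s ∈ ΓG, ∃ s' ∈ ΓH, ∀ i j,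
      ((N : ℤ) * δ) ∣ (((s' : Matrix (Fin 2) (Fin 2) ℤ)) * γ
        - γ * ((s : Matrix (Fin 2) (Fin 2) ℤ))) i j) :
    ∀ s ∈ ΓG, ∃ t ∈ ΓH,
      γ.map (Int.cast : ℤ → ℚ) * ((s : Matrix (Fin 2) (Fin 2) ℤ)).map (Int.cast : ℤ → ℚ) *
          (γ.map (Int.cast : ℤ → ℚ))⁻¹
        = ((t : Matrix (Fin 2) (Fin 2) ℤ)).map (Int.cast : ℤ → ℚ) := by
  intro s hs
  obtain ⟨s', hs'H, hdvd⟩ := hcong s hs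
  -- extract an integer matrix `M` with `s'·γ - γ·s = (N·δ) • M`
  choose M hM using fun i j => hdvd i j
  have hMmat : (s' : Matrix (Fin 2) (Fin 2) ℤ) * γ - γ * (s : Matrix (Fin 2) (Fin 2) ℤ)
      = ((N : ℤ) * δ) • (Matrix.of M) := by
    ext i j
    simpa using hM i j
  -- the candidate integer matrix for the conjugate
  set T : Matrix (Fin 2) (Fin 2) ℤ :=
    (s' : Matrix (Fin 2) (Fin 2) ℤ) - (N : ℤ) • (Matrix.of M * γ.adjugate) with hT
  -- key integral identity: γ * s * adj γ = δ • T
  have hkey : γ * (s : Matrix (Fin 2) (Fin 2) ℤ) * γ.adjugate = δ • T := by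
    have h1 : γ * (s : Matrix (Fin 2) (Fin 2) ℤ)
        = (s' : Matrix (Fin 2) (Fin 2) ℤ) * γ - ((N : ℤ) * δ) • Matrix.of M := by
      rw [← hMmat]; abel
    rw [h1, Matrix.sub_mul, Matrix.smul_mul, Matrix.mul_assoc,
      Matrix.mul_adjugate, hγ, Matrix.mul_smul, mul_one, hT, smul_sub, smul_smul,
      mul_comm (N : ℤ) δ]
  -- cast everything to ℚ via the matrix ring hom
  set φ : Matrix (Fin 2) (Fin 2) ℤ →+* Matrix (Fin 2) (Fin 2) ℚ :=
    (Int.castRingHom ℚ).mapMatrix with hφ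
  have hφmap : ∀ A : Matrix (Fin 2) (Fin 2) ℤ, φ A = A.map (Int.cast : ℤ → ℚ) := fun A => rfl
  have hdet : ∀ A : Matrix (Fin 2) (Fin 2) ℤ,
      (A.map (Int.cast : ℤ → ℚ)).det = ((A.det : ℤ) : ℚ) := by
    intro A
    rw [show A.map (Int.cast : ℤ → ℚ) = (Int.castRingHom ℚ).mapMatrix A from rfl,
      ← RingHom.map_det]
    rfl
  have hδQ : ((δ : ℚ)) ≠ 0 := by exact_mod_cast hδ.ne'
  have hγQdet : (γ.map (Int.cast : ℤ → ℚ)).det = (δ : ℚ) := by rw [hdet, hγ]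
  have hinv : (γ.map (Int.cast : ℤ → ℚ))⁻¹
      = (δ : ℚ)⁻¹ • (γ.map (Int.cast : ℤ → ℚ)).adjugate := by
    rw [Matrix.inv_def, hγQdet, Ring.inverse_eq_inv]
  have hadjm : (γ.map (Int.cast : ℤ → ℚ)).adjugate = γ.adjugate.map (Int.cast : ℤ → ℚ) := by
    rw [show γ.map (Int.cast : ℤ → ℚ) = (Int.castRingHom ℚ).mapMatrix γ from rfl,
      ← RingHom.map_adjugate]
    rfl
  have hcast : γ.map (Int.cast : ℤ → ℚ) * ((s : Matrix (Fin 2) (Fin 2) ℤ)).map Int.cast *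
      ((γ.map (Int.cast : ℤ → ℚ)).adjugate) = (δ : ℚ) • T.map (Int.cast : ℤ → ℚ) := by
    have h2 := congrArg φ hkey
    rw [map_mul, map_mul, map_zsmul] at h2
    simp only [hφmap] at h2
    rw [hadjm, Int.cast_smul_eq_zsmul]
    exact h2
  have hconj : γ.map (Int.cast : ℤ → ℚ) * ((s : Matrix (Fin 2) (Fin 2) ℤ)).map Int.cast *
      (γ.map (Int.cast : ℤ → ℚ))⁻¹ = T.map (Int.cast : ℤ → ℚ) := by
    rw [hinv, Matrix.mul_smul, Matrix.mul_assoc, ← Matrix.mul_assoc, hcast,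
      smul_smul, inv_mul_cancel₀ hδQ, one_smul]
  -- T has determinant 1
  have hTdet : T.det = 1 := by
    have hdetQ : (T.map (Int.cast : ℤ → ℚ)).det = 1 := by
      rw [← hconj]
      have hsdet : (((s : Matrix (Fin 2) (Fin 2) ℤ)).map (Int.cast : ℤ → ℚ)).det = 1 := by
        rw [hdet, s.2]; rfl
      rw [Matrix.det_mul, Matrix.det_mul, Matrix.det_nonsing_inv, hsdet, hγQdet,
        Ring.inverse_eq_inv]
      field_simp
    have h3 : ((T.det : ℤ) : ℚ) = 1 := (hdet T).symm.trans hdetQ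
    exact_mod_cast h3
  refine ⟨⟨T, hTdet⟩, ?_, hconj⟩
  -- t ∈ Γ_H since s'⁻¹ * t ∈ Γ(N)
  have hmem : s'⁻¹ * id (α := Matrix.SpecialLinearGroup (Fin 2) ℤ) ⟨T, hTdet⟩ ∈ CongruenceSubgroup.Gamma N := by
    rw [CongruenceSubgroup.Gamma_mem']
    rw [map_mul, map_inv, inv_mul_eq_one]
    ext i j
    show ((s' : Matrix (Fin 2) (Fin 2) ℤ) i j : ZMod N) = ((T i j : ℤ) : ZMod N)
    have hdvdN : (N : ℤ) ∣ ((s' : Matrix (Fin 2) (Fin 2) ℤ) i j - T i j) := by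
      refine ⟨(Matrix.of M * γ.adjugate) i j, ?_⟩
      rw [hT]
      simp only [Matrix.sub_apply, Matrix.smul_apply, smul_eq_mul]
      ring
    have h0 : (((s' : Matrix (Fin 2) (Fin 2) ℤ) i j - T i j : ℤ) : ZMod N) = 0 :=
      (ZMod.intCast_zmod_eq_zero_iff_dvd _ N).mpr hdvdN
    push_cast at h0
    exact sub_eq_zero.mp h0
  have h4 : s' * (s'⁻¹ * id (α := Matrix.SpecialLinearGroup (Fin 2) ℤ) ⟨T, hTdet⟩) ∈ ΓH := ΓH.mul_mem hs'H (hH hmem)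
  rw [mul_inv_cancel_left] at h4
  exact h4
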